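/- Any beacon attraction path in an axis-aligned orthogonal polygon is both x-monotone and y-monotone: if the path is parametrized by γ(t), then the x-coordinate of γ(t) moves monotonically toward the beacon's x-coordinate, and similarly for the y-coordinate. -/
import Mathlib


open Set

/-- Euclidean distance between points of the plane `ℝ × ℝ`. -/
noncomputable def euclDist (p q : ℝ × ℝ) : ℝ :=
  Real.sqrt ((p.1 - q.1) ^ 2 + (p.2 - q.2) ^ 2)

/-- A beacon attraction path toward beacon `q` in an orthogonal polygon,
recorded by its vertices `v 0, v 1, …, v m`: each step either moves straight
toward the beacon (`v (i+1)` lies on the segment from `v i` to `q`) or slides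
along an axis-parallel wall while the Euclidean distance to `q` decreases
(strictly at the endpoints, monotonically along the slide).  Any such path is
both x-monotone and y-monotone: the distances `|x(v i) - x(q)|` and
`|y(v i) - y(q)|` to the beacon's coordinates are non-increasing along the path. -/
theorem attraction_path_xy_monotone (q : ℝ × ℝ) (m : ℕ) (v : ℕ → ℝ × ℝ)
    (hstep : ∀ i < m,
      v (i + 1) ∈ segment ℝ (v i) q ∨
      (((v (i + 1)).1 = (v i).1 ∨ (v (i + 1)).2 = (v i).2) ∧
        AntitoneOn (fun t : ℝ => euclDist ((1 - t) • v i + t • v (i + 1)) q) (Icc 0 1) ∧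
        euclDist (v (i + 1)) q < euclDist (v i) q)) :
    ∀ i j : ℕ, i ≤ j → j ≤ m →
      |(v j).1 - q.1| ≤ |(v i).1 - q.1| ∧ |(v j).2 - q.2| ≤ |(v i).2 - q.2| := by
  have key : ∀ i < m,
      |(v (i+1)).1 - q.1| ≤ |(v i).1 - q.1| ∧ |(v (i+1)).2 - q.2| ≤ |(v i).2 - q.2| := by
    intro i him
    rcases hstep i him with hseg | ⟨hax, _hant, hdec⟩
    · obtain ⟨a, b, ha, hb, hab, heq⟩ := hseg
      have h1 : (v (i+1)).1 = a * (v i).1 + b * q.1 := by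
        rw [← heq]; simp [Prod.smul_def]
      have h2 : (v (i+1)).2 = a * (v i).2 + b * q.2 := by
        rw [← heq]; simp [Prod.smul_def]
      have ha1 : a ≤ 1 := by linarith
      constructor
      · have hb1 : b = 1 - a := by linarith
        have : (v (i+1)).1 - q.1 = a * ((v i).1 - q.1) := by rw [h1, hb1]; ring
        rw [this, abs_mul, abs_of_nonneg ha]
        nlinarith [abs_nonneg ((v i).1 - q.1)]
      · have hb1 : b = 1 - a := by linarith
        have : (v (i+1)).2 - q.2 = a * ((v i).2 - q.2) := by rw [h2, hb1]; ring
        rw [this, abs_mul, abs_of_nonneg ha]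
        nlinarith [abs_nonneg ((v i).2 - q.2)]
    · have hle := hdec.le
      unfold euclDist at hle
      set A := ((v (i+1)).1 - q.1) ^ 2 + ((v (i+1)).2 - q.2) ^ 2 with hA
      set B := ((v i).1 - q.1) ^ 2 + ((v i).2 - q.2) ^ 2 with hB
      have hAn : (0:ℝ) ≤ A := by positivity
      have hBn : (0:ℝ) ≤ B := by positivity
      have hAB : A ≤ B := by
        nlinarith [Real.sq_sqrt hAn, Real.sq_sqrt hBn, Real.sqrt_nonneg A,
          Real.sqrt_nonneg B]
      rcases hax with hx | hy
      · refine ⟨le_of_eq (by rw [hx]), ?_⟩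
        rw [← Real.sqrt_sq_eq_abs, ← Real.sqrt_sq_eq_abs]
        apply Real.sqrt_le_sqrt
        have : ((v (i+1)).1 - q.1)^2 = ((v i).1 - q.1)^2 := by rw [hx]
        nlinarith
      · refine ⟨?_, le_of_eq (by rw [hy])⟩
        rw [← Real.sqrt_sq_eq_abs, ← Real.sqrt_sq_eq_abs]
        apply Real.sqrt_le_sqrt
        have : ((v (i+1)).2 - q.2)^2 = ((v i).2 - q.2)^2 := by rw [hy]
        nlinarith
  intro i j hij hjm
  induction hij with
  | refl => exact ⟨le_rfl, le_rfl⟩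
  | @step k hk ih =>
    have hkm : k < m := hjm
    have h1 := ih hkm.le
    have h2 := key k hkm
    exact ⟨h2.1.trans h1.1, h2.2.trans h1.2⟩
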